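/- Let D be a skew Ferrers diagram occupying exactly rows 1,…,r and columns 1,…,c, with components D_1,…,D_k. A subset S ⊆ D is a noncrossing alternating spanning forest of G_D with r+c−k edges if and only if, for each t ∈ {1,…,k}, the set S ∩ D_t is the set of boxes of a monotone lattice path in D_t. Consequently, the noncrossing alternating spanning forests of G_D with r+c−k edges are in bijection with k-tuples (p_1,…,p_k) where p_t is a monotone lattice path in D_t. -/

import Mathlib

open scoped BigOperators

/-- A set of boxes `(row, column)` is a skew Ferrers diagram: it is closed under
taking any box lying weakly between two of its boxes (componentwise). -/
def IsSkew (A : Set (ℕ × ℕ)) : Prop :=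
  ∀ p ∈ A, ∀ q ∈ A, ∀ a b : ℕ, p.1 ≤ a → a ≤ q.1 → p.2 ≤ b → b ≤ q.2 → (a, b) ∈ A

/-- `A` occupies exactly the rows `1,…,r` and the columns `1,…,c`. -/
def Occupies (A : Set (ℕ × ℕ)) (r c : ℕ) : Prop :=
  (∀ p ∈ A, 1 ≤ p.1 ∧ p.1 ≤ r ∧ 1 ≤ p.2 ∧ p.2 ≤ c) ∧
  (∀ i, 1 ≤ i → i ≤ r → ∃ j, (i, j) ∈ A) ∧
  (∀ j, 1 ≤ j → j ≤ c → ∃ i, (i, j) ∈ A)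

/-- Two boxes of `A` lie in the same component of `A` (equivalently, the corresponding
edges lie in the same connected component of the bipartite graph `G_A`): they are joined
by a chain of boxes of `A` successively sharing a row or a column. -/
def sameComp (A : Set (ℕ × ℕ)) (p q : A) : Prop :=
  Relation.ReflTransGen
    (fun a b : A => (a : ℕ × ℕ).1 = (b : ℕ × ℕ).1 ∨ (a : ℕ × ℕ).2 = (b : ℕ × ℕ).2) p q

/-- The number of connected components of the bipartite graph `G_A` (for `A` occupying
exactly its rows and columns, this is the number of components of `A` under the
transitive closure of sharing a row or column). -/
noncomputable def compCount (A : Set (ℕ × ℕ)) : ℕ := Nat.card (Quot (sameComp A))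

/-- The bipartite graph on the boxes `S` (rows and columns as vertices, boxes as edges)
is acyclic: every nonempty subset of `S` contains a box which is alone in its row or
alone in its column within that subset (i.e. every nonempty subgraph has a vertex of
degree one, which characterizes forests). -/
def RowColAcyclic (S : Finset (ℕ × ℕ)) : Prop :=
  ∀ S' ⊆ S, S'.Nonempty → ∃ p ∈ S',
    (S'.filter (fun q => q.1 = p.1)).card = 1 ∨ (S'.filter (fun q => q.2 = p.2)).card = 1

/-- `S ⊆ D` is a noncrossing alternating spanning forest of `G_D` with `r+c-k` edges. -/
def IsNASF (D : Finset (ℕ × ℕ)) (r c k : ℕ) (S : Finset (ℕ × ℕ)) : Prop :=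
  S ⊆ D ∧ S.card = r + c - k ∧
  (∀ i, 1 ≤ i → i ≤ r → ∃ j, (i, j) ∈ S) ∧
  (∀ j, 1 ≤ j → j ≤ c → ∃ i, (i, j) ∈ S) ∧
  RowColAcyclic S ∧
  ∀ p ∈ S, ∀ q ∈ S, ¬(p.1 < q.1 ∧ p.2 < q.2)

/-- The vertex `e_i - e_{r+j} ∈ ℝ^{r+c}` associated to the (1-indexed) box `(i,j)`. -/
def boxVec (r c : ℕ) (p : ℕ × ℕ) : Fin (r + c) → ℝ :=
  fun t => (if (t : ℕ) = p.1 - 1 then 1 else 0) - (if (t : ℕ) = r + p.2 - 1 then 1 else 0)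

/-- One step of a monotone lattice path: the row index decreases by `1`
or the column index increases by `1`. -/
def PathStep (p q : ℕ × ℕ) : Prop :=
  (q.1 + 1 = p.1 ∧ q.2 = p.2) ∨ (q.1 = p.1 ∧ q.2 = p.2 + 1)

/-- The southwest-most box of `A`: it lies in the largest-index row and
the smallest-index column of `A`. -/
def IsSWBox (A : Set (ℕ × ℕ)) (p : ℕ × ℕ) : Prop :=
  p ∈ A ∧ ∀ q ∈ A, q.1 ≤ p.1 ∧ p.2 ≤ q.2

/-- The northeast-most box of `A`: it lies in the smallest-index row and
the largest-index column of `A`. -/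
def IsNEBox (A : Set (ℕ × ℕ)) (p : ℕ × ℕ) : Prop :=
  p ∈ A ∧ ∀ q ∈ A, p.1 ≤ q.1 ∧ q.2 ≤ p.2

/-- `L` is a monotone lattice path in `A`: a sequence of boxes of `A` starting at the
southwest-most box of `A`, ending at the northeast-most box of `A`, each box obtained
from the previous one by decreasing the row index by `1` or increasing the column
index by `1`. -/
def IsMonoPath (A : Set (ℕ × ℕ)) (L : List (ℕ × ℕ)) : Prop :=
  (∀ p ∈ L, p ∈ A) ∧ List.Chain' PathStep L ∧
  ∃ h : L ≠ [], IsSWBox A (L.head h) ∧ IsNEBox A (L.getLast h)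

/-- `q` is joined to `p` by a chain of boxes of `A` successively sharing a row or column. -/
def LinkedIn (A : Set (ℕ × ℕ)) : ℕ × ℕ → ℕ × ℕ → Prop :=
  Relation.ReflTransGen (fun a b => b ∈ A ∧ (a.1 = b.1 ∨ a.2 = b.2))

/-- The component of `A` containing the box `p`. -/
def component (A : Set (ℕ × ℕ)) (p : ℕ × ℕ) : Set (ℕ × ℕ) :=
  {q | q ∈ A ∧ LinkedIn A p q}

section Aux

variable {A : Set (ℕ × ℕ)} {p q : ℕ × ℕ}

lemma linkedIn_mem (hp : p ∈ A) (h : LinkedIn A p q) : q ∈ A := by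
  induction h with
  | refl => exact hp
  | tail _ h ih => exact h.1

lemma linkedIn_symm (hp : p ∈ A) (h : LinkedIn A p q) : LinkedIn A q p := by
  induction h with
  | refl => exact Relation.ReflTransGen.refl
  | @tail b c _ h ih =>
      exact Relation.ReflTransGen.head ⟨linkedIn_mem hp ‹_›, (h.2.imp Eq.symm Eq.symm)⟩ ih

lemma linkedIn_trans {s : ℕ × ℕ} (h : LinkedIn A p q) (h' : LinkedIn A q s) :
    LinkedIn A p s := h.trans h'

lemma mem_component_self (hp : p ∈ A) : p ∈ component A p :=
  ⟨hp, Relation.ReflTransGen.refl⟩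

lemma component_eq_of_mem (hp : p ∈ A) (hq : q ∈ component A p) :
    component A q = component A p := by
  ext x
  exact ⟨fun hx => ⟨hx.1, linkedIn_trans hq.2 hx.2⟩,
    fun hx => ⟨hx.1, linkedIn_trans (linkedIn_symm hp hq.2) hx.2⟩⟩

lemma mem_component_of_share (hp : p ∈ A) (hq : q ∈ A)
    (h : p.1 = q.1 ∨ p.2 = q.2) : q ∈ component A p :=
  ⟨hq, Relation.ReflTransGen.single ⟨hq, h⟩⟩

lemma sameComp_equivalence : Equivalence (sameComp A) := by
  constructor
  · intro x; exact Relation.ReflTransGen.refl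
  · intro x y h
    exact (@Relation.ReflTransGen.stdSymm _ _
      ⟨fun a b hab => hab.imp Eq.symm Eq.symm⟩).symm _ _ h
  · intro x y z h h'; exact h.trans h'

lemma sameComp_iff_linkedIn {hp : p ∈ A} {hq : q ∈ A} :
    sameComp A ⟨p, hp⟩ ⟨q, hq⟩ ↔ LinkedIn A p q := by
  constructor
  · intro h
    have : ∀ x y : A, sameComp A x y → LinkedIn A (x : ℕ × ℕ) (y : ℕ × ℕ) := by
      intro x y h
      induction h with
      | refl => exact Relation.ReflTransGen.refl
      | @tail b c _ h ih => exact ih.tail ⟨c.2, h⟩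
    exact this _ _ h
  · intro h
    have : ∀ x : ℕ × ℕ, LinkedIn A p x → ∀ hx : x ∈ A, sameComp A ⟨p, hp⟩ ⟨x, hx⟩ := by
      intro x h
      induction h with
      | refl => intro _; exact Relation.ReflTransGen.refl
      | @tail b c hb h ih =>
          intro hx
          exact Relation.ReflTransGen.tail (ih (linkedIn_mem hp hb)) h.2
    exact this q h hq

lemma quot_mk_eq_iff {hp : p ∈ A} {hq : q ∈ A} :
    Quot.mk (sameComp A) ⟨p, hp⟩ = Quot.mk (sameComp A) ⟨q, hq⟩ ↔ LinkedIn A p q := by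
  rw [Quot.eq, Equivalence.eqvGen_iff sameComp_equivalence, sameComp_iff_linkedIn]

lemma mem_component_iff_quot {hp : p ∈ A} :
    q ∈ component A p ↔ ∃ hq : q ∈ A, Quot.mk (sameComp A) ⟨p, hp⟩ = Quot.mk (sameComp A) ⟨q, hq⟩ := by
  constructor
  · intro h; exact ⟨h.1, quot_mk_eq_iff.2 h.2⟩
  · rintro ⟨hq, h⟩; exact ⟨hq, quot_mk_eq_iff.1 h⟩

end Aux

section Aux2

/-- Sorting order: columns increasing, ties broken by rows decreasing. -/
def boxle (p q : ℕ × ℕ) : Prop := p.2 < q.2 ∨ (p.2 = q.2 ∧ q.1 ≤ p.1)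

instance : DecidableRel boxle := fun p q => by unfold boxle; infer_instance
instance : IsTrans (ℕ × ℕ) boxle := ⟨by intro a b c h h'; unfold boxle at *; omega⟩
instance : IsAntisymm (ℕ × ℕ) boxle := ⟨by
  intro a b h h'; unfold boxle at *
  have : a.1 = b.1 ∧ a.2 = b.2 := by omega
  exact Prod.ext this.1 this.2⟩
instance : IsTotal (ℕ × ℕ) boxle := ⟨by intro a b; unfold boxle; omega⟩

/-- Monotonicity along a `PathStep` chain. -/
lemma chain_mono {L : List (ℕ × ℕ)} (hc : List.Chain' PathStep L) :
    ∀ i j (hij : i ≤ j) (hj : j < L.length),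
      L[j].1 ≤ (L[i]'(by omega)).1 ∧ (L[i]'(by omega)).2 ≤ L[j].2 := by
  intro i j hij
  induction j with
  | zero => intro hj; simp [Nat.le_zero.1 hij]
  | succ n ih =>
      intro hj
      rcases Nat.lt_or_ge i (n+1) with h | h
      · have hn : n < L.length := by omega
        have h1 := ih (by omega) hn
        have hstep := List.isChain_iff_getElem.1 hc n (by omega)
        rcases hstep with ⟨h2, h3⟩ | ⟨h2, h3⟩ <;> omega
      · have : i = n + 1 := by omega
        subst this; simp

/-- The index-measure along a `PathStep` chain. -/
lemma chain_measure {L : List (ℕ × ℕ)} (hc : List.Chain' PathStep L) :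
    ∀ i (hi : i < L.length), (L[0]'(by omega)).1 - L[i].1 + (L[i].2 - (L[0]'(by omega)).2) = i := by
  intro i
  induction i with
  | zero => intro hi; simp
  | succ n ih =>
      intro hi
      have hn : n < L.length := by omega
      have h1 := ih hn
      have hm := chain_mono hc 0 n (by omega) hn
      have hm2 := chain_mono hc 0 (n+1) (by omega) hi
      have hstep := List.isChain_iff_getElem.1 hc n (by omega)
      rcases hstep with ⟨h2, h3⟩ | ⟨h2, h3⟩ <;> omega

lemma chain_nodup {L : List (ℕ × ℕ)} (hc : List.Chain' PathStep L) : L.Nodup := by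
  rw [List.nodup_iff_injective_get]
  intro i j hij
  have h1 := chain_measure hc i i.2
  have h2 := chain_measure hc j j.2
  simp only [List.get_eq_getElem] at hij
  have : (i : ℕ) = (j : ℕ) := by rw [hij] at h1; omega
  exact Fin.ext this

lemma chain_len {L : List (ℕ × ℕ)} (hc : List.Chain' PathStep L) (hL : L ≠ []) :
    L.length = ((L.head hL).1 - (L.getLast hL).1) + ((L.getLast hL).2 - (L.head hL).2) + 1 := by
  have h0 : 0 < L.length := List.length_pos_iff.2 hL
  rw [List.head_eq_getElem, List.getLast_eq_getElem]
  have h1 := chain_measure hc (L.length - 1) (by omega)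
  have h2 := chain_mono hc 0 (L.length - 1) (by omega) (by omega)
  omega

/-- Row coverage along a `PathStep` chain. -/
lemma chain_row_cover {L : List (ℕ × ℕ)} (hc : List.Chain' PathStep L) (hL : L ≠ [])
    {i : ℕ} (h1 : (L.getLast hL).1 ≤ i) (h2 : i ≤ (L.head hL).1) :
    ∃ q ∈ L, q.1 = i := by
  rw [List.head_eq_getElem] at h2
  rw [List.getLast_eq_getElem] at h1
  have hlen : 0 < L.length := List.length_pos_iff.2 hL
  -- there is an index whose row is i
  by_contra hcon
  push_neg at hcon
  have key : ∀ t, ∀ ht : t < L.length, ¬ (L[t].1 < i) := by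
    intro t
    induction t with
    | zero => intro ht; omega
    | succ n ih =>
        intro ht hlt
        have hn : n < L.length := by omega
        rcases Nat.lt_or_ge (L[n]'hn).1 i with h | h
        · exact ih hn h
        · have hstep := List.isChain_iff_getElem.1 hc n (by omega)
          have hne := hcon (L[n]'hn) (List.getElem_mem _)
          have hne2 := hcon (L[n+1]'ht) (List.getElem_mem _)
          rcases hstep with ⟨a, b⟩ | ⟨a, b⟩ <;> omega
  have := key (L.length - 1) (by omega)
  have := hcon (L[L.length-1]'(by omega)) (List.getElem_mem _)
  omega

/-- Column coverage along a `PathStep` chain. -/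
lemma chain_col_cover {L : List (ℕ × ℕ)} (hc : List.Chain' PathStep L) (hL : L ≠ [])
    {j : ℕ} (h1 : (L.head hL).2 ≤ j) (h2 : j ≤ (L.getLast hL).2) :
    ∃ q ∈ L, q.2 = j := by
  rw [List.head_eq_getElem] at h1
  rw [List.getLast_eq_getElem] at h2
  have hlen : 0 < L.length := List.length_pos_iff.2 hL
  by_contra hcon
  push_neg at hcon
  have key : ∀ t, ∀ ht : t < L.length, ¬ (j < L[t].2) := by
    intro t
    induction t with
    | zero => intro ht; omega
    | succ n ih =>
        intro ht hlt
        have hn : n < L.length := by omega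
        rcases Nat.lt_or_ge j (L[n]'hn).2 with h | h
        · exact ih hn h
        · have hstep := List.isChain_iff_getElem.1 hc n (by omega)
          have hne := hcon (L[n]'hn) (List.getElem_mem _)
          have hne2 := hcon (L[n+1]'ht) (List.getElem_mem _)
          rcases hstep with ⟨a, b⟩ | ⟨a, b⟩ <;> omega
  have := key (L.length - 1) (by omega)
  have := hcon (L[L.length-1]'(by omega)) (List.getElem_mem _)
  omega

end Aux2

section Aux3
open Finset

lemma tele_sum (f : ℕ → ℕ) : ∀ n, (∀ i, i + 1 ≤ n → f (i+1) ≤ f i) →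
    ∑ i ∈ Finset.range n, (f i - f (i+1)) = f 0 - f n := by
  intro n
  induction n with
  | zero => simp
  | succ m ih =>
      intro h
      rw [Finset.sum_range_succ, ih (fun i hi => h i (by omega))]
      have : ∀ i, i + 1 ≤ m + 1 → f (i+1) ≤ f i := h
      have hmono : ∀ i, i ≤ m + 1 → f i ≤ f 0 := by
        intro i
        induction i with
        | zero => intro _; exact le_rfl
        | succ a iha => intro ha; exact le_trans (h a (by omega)) (iha (by omega))
      have h1 := h m (le_rfl)
      have h2 := hmono m (by omega)
      have h3 := hmono (m+1) le_rfl
      omega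

lemma count_two_sum (d : ℕ → ℕ) (N : ℕ) (h : ∀ i ∈ Finset.range N, d i = 1 ∨ d i = 2) :
    ∑ i ∈ Finset.range N, d i
      = N + ((Finset.range N).filter (fun i => d i = 2)).card := by
  classical
  induction N with
  | zero => simp
  | succ m ih =>
      rw [Finset.sum_range_succ, ih (fun i hi => h i (by simp at hi ⊢; omega)),
        Finset.range_add_one, Finset.filter_insert]
      have hm := h m (by simp)
      rcases hm with hm | hm
      · rw [if_neg (by omega)]; omega
      · rw [if_pos hm, Finset.card_insert_of_notMem (by simp)]; omega

/-- Noncrossing implies the degree-one condition (acyclicity). -/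
lemma acyclic_of_noncrossing {S : Finset (ℕ × ℕ)}
    (hnc : ∀ p ∈ S, ∀ q ∈ S, ¬(p.1 < q.1 ∧ p.2 < q.2)) : RowColAcyclic S := by
  classical
  intro S' hsub hSne
  -- q0 : box with max column in S'
  obtain ⟨q0, hq0, hq0max⟩ := S'.exists_max_image (fun q => q.2) hSne
  -- among boxes with this column, take the one with min row
  have hTne : (S'.filter (fun q => q.2 = q0.2)).Nonempty := ⟨q0, by simp [hq0]⟩
  obtain ⟨p, hpmem, hpmin⟩ := (S'.filter (fun q => q.2 = q0.2)).exists_min_image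
    (fun q => q.1) hTne
  simp only [Finset.mem_filter] at hpmem
  refine ⟨p, hpmem.1, ?_⟩
  -- facts: ∀ q ∈ S', q.2 ≤ p.2, and if q.2 = p.2 then p.1 ≤ q.1
  have hcolmax : ∀ q ∈ S', q.2 ≤ p.2 := by
    intro q hq; rw [hpmem.2]; exact hq0max q hq
  have hrowmin : ∀ q ∈ S', q.2 = p.2 → p.1 ≤ q.1 := by
    intro q hq hq2
    exact hpmin q (Finset.mem_filter.2 ⟨hq, by rw [hq2, hpmem.2]⟩)
  by_cases hrow : ∃ q ∈ S', q.1 = p.1 ∧ q ≠ p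
  · -- then the column filter is {p}
    right
    have : S'.filter (fun q => q.2 = p.2) = {p} := by
      apply Finset.eq_singleton_iff_unique_mem.2
      refine ⟨Finset.mem_filter.2 ⟨hpmem.1, rfl⟩, ?_⟩
      intro x hx
      rw [Finset.mem_filter] at hx
      by_contra hxp
      obtain ⟨e, he, he1, hene⟩ := hrow
      -- x : same column, different box so x.1 > p.1 ; e : same row, e.2 < p.2
      have hx1 : p.1 < x.1 := by
        rcases Nat.lt_or_ge p.1 x.1 with h | h
        · exact h
        · exfalso
          have := hrowmin x hx.1 hx.2
          exact hxp (Prod.ext (by omega) hx.2)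
      have he2 : e.2 < p.2 := by
        rcases Nat.lt_or_ge e.2 p.2 with h | h
        · exact h
        · exfalso
          have := hcolmax e he
          exact hene (Prod.ext he1 (by omega))
      exact hnc e (hsub he) x (hsub hx.1) ⟨by omega, by omega⟩
    rw [this]; simp
  · left
    push_neg at hrow
    have : S'.filter (fun q => q.1 = p.1) = {p} := by
      apply Finset.eq_singleton_iff_unique_mem.2
      refine ⟨Finset.mem_filter.2 ⟨hpmem.1, rfl⟩, ?_⟩
      intro x hx
      rw [Finset.mem_filter] at hx
      by_contra hxp
      exact hxp (hrow x hx.1 hx.2)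
    rw [this]; simp

end Aux3

section Aux4
open Finset

lemma blocks {Q : Type} [Finite Q] {m : ℕ} (hm : 0 < m) (g : ℕ → Q)
    (Br : Finset ℕ) (hBr : Br ⊆ Finset.range (m-1))
    (hstep : ∀ i, i + 1 < m → i ∉ Br → g i = g (i+1))
    (hsurj : ∀ q : Q, ∃ i, i < m ∧ g i = q)
    (hcard : Br.card + 1 ≤ Nat.card Q) :
    (∀ i t j, i ≤ t → t ≤ j → j < m → g i = g j → g t = g i) ∧
    (∀ i ∈ Br, g i ≠ g (i+1)) := by
  classical
  set Br' : Finset ℕ := (Finset.range (m-1)).filter (fun i => g i ≠ g (i+1)) with hBr'def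
  have hBr'sub : Br' ⊆ Br := by
    intro i hi
    rw [hBr'def, Finset.mem_filter, Finset.mem_range] at hi
    by_contra hne
    exact hi.2 (hstep i (by omega) hne)
  set T : Finset ℕ := insert 0 (Br'.image (· + 1)) with hTdef
  have h0T : (0 : ℕ) ∈ T := by simp [hTdef]
  have hTlt : ∀ t ∈ T, t < m := by
    intro t ht
    rw [hTdef, Finset.mem_insert] at ht
    rcases ht with h | h
    · omega
    · obtain ⟨i, hi, rfl⟩ := Finset.mem_image.1 h
      have := (Finset.mem_filter.1 hi).1
      rw [Finset.mem_range] at this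
      omega
  have hfilne : ∀ j : ℕ, ((T.filter (· ≤ j)).Nonempty) := fun j => ⟨0, by simp [h0T]⟩
  set start : ℕ → ℕ := fun j => (T.filter (· ≤ j)).max' (hfilne j) with hstartdef
  have hstart_mem : ∀ j, start j ∈ T ∧ start j ≤ j := by
    intro j
    have := Finset.max'_mem (T.filter (· ≤ j)) (hfilne j)
    rw [Finset.mem_filter] at this
    exact this
  have hstart_self : ∀ j ∈ T, start j = j := by
    intro j hj
    have h1 : j ≤ start j := Finset.le_max' _ j (by simp [hj])
    have h2 := (hstart_mem j).2
    omega
  have hstart_mono : ∀ i j, i ≤ j → start i ≤ start j := by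
    intro i j hij
    exact Finset.le_max' _ _ (by
      rw [Finset.mem_filter]
      exact ⟨(hstart_mem i).1, le_trans (hstart_mem i).2 hij⟩)
  have hg_start : ∀ j, j < m → g j = g (start j) := by
    intro j
    induction j using Nat.strong_induction_on with
    | _ j ih =>
      intro hj
      by_cases hjT : j ∈ T
      · rw [hstart_self j hjT]
      · have hj0 : j ≠ 0 := fun h => hjT (h ▸ h0T)
        have hjBr' : j - 1 ∉ Br' := by
          intro h
          exact hjT (by
            rw [hTdef]
            exact Finset.mem_insert_of_mem (Finset.mem_image.2 ⟨j-1, h, by omega⟩))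
        have hgeq : g (j-1) = g j := by
          by_contra hne
          apply hjBr'
          rw [hBr'def, Finset.mem_filter, Finset.mem_range]
          constructor
          · omega
          · intro h; apply hne; rw [h]; congr 1; omega
        have hse : start j = start (j-1) := by
          apply le_antisymm
          · apply Finset.le_max'
            rw [Finset.mem_filter]
            refine ⟨(hstart_mem j).1, ?_⟩
            have h1 := (hstart_mem j).2
            have h2 : start j ≠ j := fun h => hjT (h ▸ (hstart_mem j).1)
            omega
          · exact hstart_mono _ _ (by omega)
        rw [← hgeq, hse, ih (j-1) (by omega) (by omega)]
  haveI := Fintype.ofFinite Q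
  set φ : {t // t ∈ T} → Q := fun t => g t with hφdef
  have hφsurj : Function.Surjective φ := by
    intro q
    obtain ⟨i, him, hi⟩ := hsurj q
    exact ⟨⟨start i, (hstart_mem i).1⟩, by
      rw [hφdef]; simp only []; rw [← hg_start i him, hi]⟩
  have hTcard : T.card = Br'.card + 1 := by
    rw [hTdef, Finset.card_insert_of_notMem (by simp), Finset.card_image_of_injective _
      (fun a b => by omega)]
  have hcardle : Fintype.card Q ≤ T.card := by
    have := Fintype.card_le_of_surjective φ hφsurj
    simpa using this
  have hcardge : T.card ≤ Fintype.card Q := by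
    have h1 : Br'.card ≤ Br.card := Finset.card_le_card hBr'sub
    rw [Nat.card_eq_fintype_card] at hcard
    omega
  have hφbij : Function.Bijective φ :=
    (Fintype.bijective_iff_surjective_and_card φ).2 ⟨hφsurj, by simp; omega⟩
  have hBreq : Br' = Br := by
    apply Finset.eq_of_subset_of_card_le hBr'sub
    rw [Nat.card_eq_fintype_card] at hcard
    omega
  constructor
  · intro i t j hit htj hjm hgij
    have him : i < m := by omega
    have htm : t < m := by omega
    have hsij : start i = start j := by
      have h1 : φ ⟨start i, (hstart_mem i).1⟩ = φ ⟨start j, (hstart_mem j).1⟩ := by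
        rw [hφdef]
        simp only []
        rw [← hg_start i him, ← hg_start j hjm, hgij]
      have := hφbij.1 h1
      exact Subtype.ext_iff.1 this
    have h2 : start t = start i := by
      have := hstart_mono i t hit
      have := hstart_mono t j htj
      omega
    rw [hg_start t htm, h2, ← hg_start i him]
  · intro i hi
    rw [← hBreq, hBr'def, Finset.mem_filter] at hi
    exact hi.2

end Aux4

section Rev
open Finset

set_option maxHeartbeats 1600000 in
lemma mp_rev (D : Finset (ℕ × ℕ)) (r c k : ℕ) (hne : D.Nonempty)
    (hskew : IsSkew (↑D)) (hocc : Occupies (↑D) r c) (hk : compCount (↑D) = k)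
    (S : Finset (ℕ × ℕ)) (hS : (↑S : Set (ℕ × ℕ)) ⊆ (↑D : Set (ℕ × ℕ)))
    (H : ∀ p ∈ D, ∃ L : List (ℕ × ℕ),
        IsMonoPath (component (↑D) p) L ∧
        ((↑S : Set (ℕ × ℕ)) ∩ component (↑D) p) = {q | q ∈ L}) :
    IsNASF D r c k S := by
  classical
  have hSD : S ⊆ D := fun x hx => hS hx
  -- noncrossing
  have hnc : ∀ p ∈ S, ∀ q ∈ S, ¬(p.1 < q.1 ∧ p.2 < q.2) := by
    rintro p hpS q hqS ⟨h1, h2⟩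
    have hpD : p ∈ (↑D : Set (ℕ × ℕ)) := hS hpS
    have hqD : q ∈ (↑D : Set (ℕ × ℕ)) := hS hqS
    have hmid : ((p.1, q.2) : ℕ × ℕ) ∈ (↑D : Set (ℕ × ℕ)) :=
      hskew p hpD q hqD p.1 q.2 le_rfl (le_of_lt h1) (le_of_lt h2) le_rfl
    have hqcomp : q ∈ component (↑D) p :=
      ⟨hqD, Relation.ReflTransGen.head ⟨hmid, Or.inl rfl⟩
        (Relation.ReflTransGen.single ⟨hqD, Or.inr rfl⟩)⟩
    obtain ⟨L, ⟨hLmem, hLchain, hLne, hsw, hne'⟩, hset⟩ := H p (hS hpS)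
    have hpL : p ∈ L := by
      have : p ∈ (↑S : Set (ℕ × ℕ)) ∩ component (↑D) p :=
        ⟨hpS, mem_component_self hpD⟩
      rwa [hset] at this
    have hqL : q ∈ L := by
      have : q ∈ (↑S : Set (ℕ × ℕ)) ∩ component (↑D) p := ⟨hqS, hqcomp⟩
      rwa [hset] at this
    obtain ⟨ip, hip, hipe⟩ := List.mem_iff_getElem.1 hpL
    obtain ⟨iq, hiq, hiqe⟩ := List.mem_iff_getElem.1 hqL
    rcases le_or_gt ip iq with h | h
    · have := chain_mono hLchain ip iq h hiq
      rw [hipe, hiqe] at this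
      omega
    · have := chain_mono hLchain iq ip (by omega) hip
      rw [hipe, hiqe] at this
      omega
  -- spanning rows
  have hrows : ∀ i, 1 ≤ i → i ≤ r → ∃ j, (i, j) ∈ S := by
    intro i h1 h2
    obtain ⟨j, hij⟩ := hocc.2.1 i h1 h2
    have hpD : ((i, j) : ℕ × ℕ) ∈ D := hij
    obtain ⟨L, ⟨hLmem, hLchain, hLne, hsw, hne'⟩, hset⟩ := H (i, j) hpD
    have hpc : ((i, j) : ℕ × ℕ) ∈ component (↑D) (i, j) := mem_component_self hij
    have hb1 := (hsw.2 _ hpc).1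
    have hb2 := (hne'.2 _ hpc).1
    obtain ⟨x, hxL, hx1⟩ := chain_row_cover hLchain hLne (by simpa using hb2) (by simpa using hb1)
    have hxS : x ∈ (↑S : Set (ℕ × ℕ)) := by
      have : x ∈ (↑S : Set (ℕ × ℕ)) ∩ component (↑D) (i, j) := by rw [hset]; exact hxL
      exact this.1
    exact ⟨x.2, by rwa [← hx1, Prod.mk.eta] ⟩
  -- spanning cols
  have hcols : ∀ j, 1 ≤ j → j ≤ c → ∃ i, (i, j) ∈ S := by
    intro j h1 h2
    obtain ⟨i, hij⟩ := hocc.2.2 j h1 h2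
    have hpD : ((i, j) : ℕ × ℕ) ∈ D := hij
    obtain ⟨L, ⟨hLmem, hLchain, hLne, hsw, hne'⟩, hset⟩ := H (i, j) hpD
    have hpc : ((i, j) : ℕ × ℕ) ∈ component (↑D) (i, j) := mem_component_self hij
    have hb1 := (hsw.2 _ hpc).2
    have hb2 := (hne'.2 _ hpc).2
    obtain ⟨x, hxL, hx2⟩ := chain_col_cover hLchain hLne (by simpa using hb1) (by simpa using hb2)
    have hxS : x ∈ (↑S : Set (ℕ × ℕ)) := by
      have : x ∈ (↑S : Set (ℕ × ℕ)) ∩ component (↑D) (i, j) := by rw [hset]; exact hxL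
      exact this.1
    exact ⟨x.1, by rwa [← hx2, Prod.mk.eta]⟩
  -- cardinality
  have hcard : S.card = r + c - k := by
    set Q := Quot (sameComp (↑D : Set (ℕ × ℕ))) with hQdef
    haveI : Finite ↥(↑D : Set (ℕ × ℕ)) := D.finite_toSet
    haveI : Finite Q := Quot.finite _
    haveI := Fintype.ofFinite Q
    obtain ⟨p0, hp0⟩ := hne
    have hp0' : p0 ∈ (↑D : Set (ℕ × ℕ)) := hp0
    set f : ℕ × ℕ → Q := fun x =>
      if h : x ∈ (↑D : Set (ℕ × ℕ)) then Quot.mk _ ⟨x, h⟩ else Quot.mk _ ⟨p0, hp0'⟩ with hfdef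
    set rowbox : ℕ → ℕ × ℕ := fun i =>
      if h : ∃ j, ((i, j) : ℕ × ℕ) ∈ (↑D : Set (ℕ × ℕ)) then (i, h.choose) else p0 with hrbdef
    set colbox : ℕ → ℕ × ℕ := fun j =>
      if h : ∃ i, ((i, j) : ℕ × ℕ) ∈ (↑D : Set (ℕ × ℕ)) then (h.choose, j) else p0 with hcbdef
    have hrb : ∀ i, 1 ≤ i → i ≤ r → rowbox i ∈ (↑D : Set (ℕ × ℕ)) ∧ (rowbox i).1 = i := by
      intro i h1 h2
      have hex : ∃ j, ((i, j) : ℕ × ℕ) ∈ (↑D : Set (ℕ × ℕ)) := hocc.2.1 i h1 h2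
      rw [hrbdef]
      simp only [dif_pos hex]
      exact ⟨hex.choose_spec, trivial⟩
    have hcb : ∀ j, 1 ≤ j → j ≤ c → colbox j ∈ (↑D : Set (ℕ × ℕ)) ∧ (colbox j).2 = j := by
      intro j h1 h2
      have hex : ∃ i, ((i, j) : ℕ × ℕ) ∈ (↑D : Set (ℕ × ℕ)) := hocc.2.2 j h1 h2
      rw [hcbdef]
      simp only [dif_pos hex]
      exact ⟨hex.choose_spec, trivial⟩
    -- per-class data
    have claim : ∀ q : Q, ∃ R C : ℕ, 1 ≤ R ∧ 1 ≤ C ∧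
        ((Finset.Icc 1 r).filter (fun i => f (rowbox i) = q)).card = R ∧
        ((Finset.Icc 1 c).filter (fun j => f (colbox j) = q)).card = C ∧
        (S.filter (fun x => f x = q)).card = R + C - 1 := by
      intro q
      obtain ⟨⟨p, hpD⟩, rfl⟩ := Quot.exists_rep q
      obtain ⟨L, ⟨hLmem, hLchain, hLne, hsw, hne'⟩, hset⟩ := H p hpD
      set SW := L.head hLne with hSWdef
      set NE := L.getLast hLne with hNEdef
      have hSWc : SW ∈ component (↑D) p := hsw.1
      have hNEc : NE ∈ component (↑D) p := hne'.1
      have hbnd : NE.1 ≤ SW.1 ∧ SW.2 ≤ NE.2 := ⟨(hsw.2 _ hNEc).1, (hsw.2 _ hNEc).2⟩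
      have hfq : ∀ x, x ∈ (↑D : Set (ℕ × ℕ)) →
          (f x = Quot.mk _ ⟨p, hpD⟩ ↔ x ∈ component (↑D) p) := by
        intro x hx
        rw [hfdef]
        simp only [dif_pos hx]
        constructor
        · intro h
          exact ⟨hx, quot_mk_eq_iff.1 h.symm⟩
        · intro h
          exact (quot_mk_eq_iff.2 h.2).symm
      -- the S filter is L.toFinset
      have hSfil : S.filter (fun x => f x = Quot.mk _ ⟨p, hpD⟩) = L.toFinset := by
        ext x
        rw [Finset.mem_filter, List.mem_toFinset]
        constructor
        · rintro ⟨hxS, hxf⟩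
          have hxD : x ∈ (↑D : Set (ℕ × ℕ)) := hS hxS
          have hxc : x ∈ component (↑D) p := (hfq x hxD).1 hxf
          have : x ∈ (↑S : Set (ℕ × ℕ)) ∩ component (↑D) p := ⟨hxS, hxc⟩
          rwa [hset] at this
        · intro hxL
          have : x ∈ (↑S : Set (ℕ × ℕ)) ∩ component (↑D) p := by rw [hset]; exact hxL
          exact ⟨this.1, (hfq x (hS this.1)).2 this.2⟩
      have hlen : L.length = (SW.1 - NE.1) + (NE.2 - SW.2) + 1 := chain_len hLchain hLne
      have hScard : (S.filter (fun x => f x = Quot.mk _ ⟨p, hpD⟩)).card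
          = (SW.1 - NE.1) + (NE.2 - SW.2) + 1 := by
        rw [hSfil, List.toFinset_card_of_nodup (chain_nodup hLchain), hlen]
      -- row filter
      have hRfil : (Finset.Icc 1 r).filter (fun i => f (rowbox i) = Quot.mk _ ⟨p, hpD⟩)
          = Finset.Icc NE.1 SW.1 := by
        ext i
        rw [Finset.mem_filter, Finset.mem_Icc, Finset.mem_Icc]
        constructor
        · rintro ⟨⟨h1, h2⟩, hfi⟩
          obtain ⟨hrbD, hrb1⟩ := hrb i h1 h2
          have hxc : rowbox i ∈ component (↑D) p := (hfq _ hrbD).1 hfi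
          have := hsw.2 _ hxc
          have := hne'.2 _ hxc
          omega
        · rintro ⟨h1, h2⟩
          have hNED : NE ∈ (↑D : Set (ℕ × ℕ)) := hNEc.1
          have hSWD : SW ∈ (↑D : Set (ℕ × ℕ)) := hSWc.1
          have hb1 := (hocc.1 _ hNED).1
          have hb2 := (hocc.1 _ hSWD).2.1
          have hi1 : 1 ≤ i := by omega
          have hi2 : i ≤ r := by omega
          obtain ⟨hrbD, hrb1⟩ := hrb i hi1 hi2
          refine ⟨⟨hi1, hi2⟩, ?_⟩
          obtain ⟨x, hxL, hx1⟩ := chain_row_cover hLchain hLne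
            (show NE.1 ≤ i by omega) (show i ≤ SW.1 by omega)
          have hxc : x ∈ component (↑D) p := hLmem x hxL
          have hrbc : rowbox i ∈ component (↑D) x :=
            mem_component_of_share hxc.1 hrbD (Or.inl (by omega))
          rw [component_eq_of_mem hpD hxc] at hrbc
          exact (hfq _ hrbD).2 hrbc
      -- col filter
      have hCfil : (Finset.Icc 1 c).filter (fun j => f (colbox j) = Quot.mk _ ⟨p, hpD⟩)
          = Finset.Icc SW.2 NE.2 := by
        ext j
        rw [Finset.mem_filter, Finset.mem_Icc, Finset.mem_Icc]
        constructor
        · rintro ⟨⟨h1, h2⟩, hfj⟩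
          obtain ⟨hcbD, hcb2⟩ := hcb j h1 h2
          have hxc : colbox j ∈ component (↑D) p := (hfq _ hcbD).1 hfj
          have := hsw.2 _ hxc
          have := hne'.2 _ hxc
          omega
        · rintro ⟨h1, h2⟩
          have hNED : NE ∈ (↑D : Set (ℕ × ℕ)) := hNEc.1
          have hSWD : SW ∈ (↑D : Set (ℕ × ℕ)) := hSWc.1
          have hb1 := (hocc.1 _ hSWD).2.2.1
          have hb2 := (hocc.1 _ hNED).2.2.2
          have hj1 : 1 ≤ j := by omega
          have hj2 : j ≤ c := by omega
          obtain ⟨hcbD, hcb2⟩ := hcb j hj1 hj2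
          refine ⟨⟨hj1, hj2⟩, ?_⟩
          obtain ⟨x, hxL, hx2⟩ := chain_col_cover hLchain hLne
            (show SW.2 ≤ j by omega) (show j ≤ NE.2 by omega)
          have hxc : x ∈ component (↑D) p := hLmem x hxL
          have hcbc : colbox j ∈ component (↑D) x :=
            mem_component_of_share hxc.1 hcbD (Or.inr (by omega))
          rw [component_eq_of_mem hpD hxc] at hcbc
          exact (hfq _ hcbD).2 hcbc
      refine ⟨SW.1 - NE.1 + 1, NE.2 - SW.2 + 1, by omega, by omega, ?_, ?_, ?_⟩
      · rw [hRfil, Nat.card_Icc]; omega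
      · rw [hCfil, Nat.card_Icc]; omega
      · rw [hScard]; omega
    choose R C hR1 hC1 hRc hCc hSc using claim
    have h1 : S.card = ∑ q : Q, (R q + C q - 1) := by
      rw [Finset.card_eq_sum_card_fiberwise (f := f) (t := Finset.univ) (fun x _ => mem_univ _)]
      exact Finset.sum_congr rfl fun q _ => hSc q
    have h2 : r = ∑ q : Q, R q := by
      have := Finset.card_eq_sum_card_fiberwise
        (f := fun i => f (rowbox i)) (s := Finset.Icc 1 r) (t := Finset.univ)
        (fun x _ => mem_univ _)
      rw [Nat.card_Icc] at this
      rw [show r = r + 1 - 1 by omega, this]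
      exact Finset.sum_congr rfl fun q _ => hRc q
    have h3 : c = ∑ q : Q, C q := by
      have := Finset.card_eq_sum_card_fiberwise
        (f := fun j => f (colbox j)) (s := Finset.Icc 1 c) (t := Finset.univ)
        (fun x _ => mem_univ _)
      rw [Nat.card_Icc] at this
      rw [show c = c + 1 - 1 by omega, this]
      exact Finset.sum_congr rfl fun q _ => hCc q
    have h4 : Fintype.card Q = k := by
      rw [← Nat.card_eq_fintype_card, ← hk]; rfl
    have h5 : ∑ q : Q, (R q + C q - 1) = ∑ q : Q, ((R q - 1) + C q) :=
      Finset.sum_congr rfl fun q _ => by have := hR1 q; have := hC1 q; omega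
    have h6 : ∑ q : Q, ((R q - 1) + C q) = ∑ q : Q, (R q - 1) + ∑ q : Q, C q :=
      Finset.sum_add_distrib
    have h7 : ∑ q : Q, R q = ∑ q : Q, (R q - 1) + Fintype.card Q := by
      rw [← Finset.card_univ,
        show ((Finset.univ : Finset Q).card : ℕ) = ∑ _q : Q, 1 by simp,
        ← Finset.sum_add_distrib]
      exact Finset.sum_congr rfl fun q _ => by have := hR1 q; omega
    omega
  exact ⟨hSD, hcard, hrows, hcols, acyclic_of_noncrossing hnc, hnc⟩

end Rev

section Fwd
open Finset

lemma tele_sum' (f : ℕ → ℕ) : ∀ n, (∀ i, i + 1 ≤ n → f i ≤ f (i+1)) →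
    ∑ i ∈ Finset.range n, (f (i+1) - f i) = f n - f 0 := by
  intro n
  induction n with
  | zero => simp
  | succ m ih =>
      intro h
      rw [Finset.sum_range_succ, ih (fun i hi => h i (by omega))]
      have hmono : ∀ i, i ≤ m + 1 → f 0 ≤ f i := by
        intro i
        induction i with
        | zero => intro _; exact le_rfl
        | succ a iha => intro ha; exact le_trans (iha (by omega)) (h a (by omega))
      have h1 := h m le_rfl
      have h2 := hmono m (by omega)
      have h3 := hmono (m+1) le_rfl
      omega

set_option maxHeartbeats 1600000 in
lemma mp_fwd (D : Finset (ℕ × ℕ)) (r c k : ℕ) (hne : D.Nonempty)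
    (hocc : Occupies (↑D) r c) (hk : compCount (↑D) = k)
    (S : Finset (ℕ × ℕ)) (hN : IsNASF D r c k S) :
    ∀ p ∈ D, ∃ L : List (ℕ × ℕ),
      IsMonoPath (component (↑D) p) L ∧
      ((↑S : Set (ℕ × ℕ)) ∩ component (↑D) p) = {q | q ∈ L} := by
  classical
  obtain ⟨hSD, hcard, hrows, hcols, hacy, hnc⟩ := hN
  have hr1 : 1 ≤ r ∧ 1 ≤ c := by
    obtain ⟨p0, hp0⟩ := hne
    have := hocc.1 p0 hp0
    omega
  set l : List (ℕ × ℕ) := Finset.sort S boxle with hldef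
  set m : ℕ := l.length with hmdef
  have hmcard : m = S.card := Finset.length_sort (r := boxle)
  set a : ℕ → ℕ × ℕ := fun i => l.getD i (1, 1) with hadef
  have hget : ∀ i (h : i < m), a i = l[i] := fun i h => List.getD_eq_getElem l (1,1) h
  have haS : ∀ i, i < m → a i ∈ S := by
    intro i h
    rw [hget i h]
    have := List.getElem_mem (l := l) (n := i) h
    rwa [Finset.mem_sort] at this
  have haD : ∀ i, i < m → a i ∈ (↑D : Set (ℕ × ℕ)) := fun i h => hSD (haS i h)
  have hbox : ∀ i, i < m → 1 ≤ (a i).1 ∧ (a i).1 ≤ r ∧ 1 ≤ (a i).2 ∧ (a i).2 ≤ c :=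
    fun i h => hocc.1 _ (haD i h)
  -- monotonicity
  have hmono : ∀ i j, i < j → j < m → (a j).1 ≤ (a i).1 ∧ (a i).2 ≤ (a j).2 ∧
      ((a j).1 < (a i).1 ∨ (a i).2 < (a j).2) := by
    intro i j hij hj
    have hi : i < m := by omega
    have hs := Finset.pairwise_sort (s := S) (r := boxle)
    have hrel : boxle (a i) (a j) := by
      rw [hget i hi, hget j hj]
      have := hs.rel_get_of_lt (a := ⟨i, hi⟩) (b := ⟨j, hj⟩) (by exact hij)
      simpa using this
    have hne' : a i ≠ a j := by
      rw [hget i hi, hget j hj]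
      intro h
      have := (Finset.sort_nodup (s := S) (r := boxle)).getElem_inj_iff.1 h
      omega
    have hrow : (a j).1 ≤ (a i).1 := by
      rcases hrel with h | h
      · by_contra hcon
        exact hnc (a i) (haS i hi) (a j) (haS j hj) ⟨by omega, h⟩
      · exact h.2
    have hcol : (a i).2 ≤ (a j).2 := by
      rcases hrel with h | h
      · omega
      · omega
    refine ⟨hrow, hcol, ?_⟩
    by_contra hcon
    push_neg at hcon
    exact hne' (Prod.ext (by omega) (by omega))
  -- coverage of rows and columns
  have hrowhit : ∀ i, 1 ≤ i → i ≤ r → ∃ t, t < m ∧ (a t).1 = i := by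
    intro i h1 h2
    obtain ⟨j, hj⟩ := hrows i h1 h2
    have : ((i, j) : ℕ × ℕ) ∈ l := by rw [hldef, Finset.mem_sort]; exact hj
    obtain ⟨t, ht, hte⟩ := List.mem_iff_getElem.1 this
    exact ⟨t, ht, by rw [hget t ht, hte]⟩
  have hcolhit : ∀ j, 1 ≤ j → j ≤ c → ∃ t, t < m ∧ (a t).2 = j := by
    intro j h1 h2
    obtain ⟨i, hi⟩ := hcols j h1 h2
    have : ((i, j) : ℕ × ℕ) ∈ l := by rw [hldef, Finset.mem_sort]; exact hi
    obtain ⟨t, ht, hte⟩ := List.mem_iff_getElem.1 this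
    exact ⟨t, ht, by rw [hget t ht, hte]⟩
  have hm1 : 1 ≤ m := by
    obtain ⟨t, ht, -⟩ := hrowhit 1 le_rfl hr1.1
    omega
  -- endpoints
  have hend : (a 0).1 = r ∧ (a 0).2 = 1 ∧ (a (m-1)).1 = 1 ∧ (a (m-1)).2 = c := by
    obtain ⟨t1, ht1, he1⟩ := hrowhit r hr1.1 le_rfl
    obtain ⟨t2, ht2, he2⟩ := hrowhit 1 le_rfl hr1.1
    obtain ⟨t3, ht3, he3⟩ := hcolhit 1 le_rfl hr1.2
    obtain ⟨t4, ht4, he4⟩ := hcolhit c hr1.2 le_rfl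
    have hb0 := hbox 0 (by omega)
    have hbm := hbox (m-1) (by omega)
    constructor
    · rcases Nat.eq_zero_or_pos t1 with h | h
      · rw [← h]; omega
      · have := (hmono 0 t1 h ht1).1; omega
    constructor
    · rcases Nat.eq_zero_or_pos t3 with h | h
      · rw [← h]; omega
      · have := (hmono 0 t3 h ht3).2.1; omega
    constructor
    · rcases Nat.lt_or_ge t2 (m-1) with h | h
      · have := (hmono t2 (m-1) h (by omega)).1; omega
      · have : t2 = m - 1 := by omega
        rw [← this]; omega
    · rcases Nat.lt_or_ge t4 (m-1) with h | h
      · have := (hmono t4 (m-1) h (by omega)).2.1; omega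
      · have : t4 = m - 1 := by omega
        rw [← this]; omega
  -- unit gaps
  have hgapr : ∀ i, i + 1 < m → (a i).1 ≤ (a (i+1)).1 + 1 := by
    intro i hi
    by_contra hcon
    push_neg at hcon
    have hb1 := hbox i (by omega)
    have hb2 := hbox (i+1) hi
    obtain ⟨t, ht, hte⟩ := hrowhit ((a i).1 - 1) (by omega) (by omega)
    rcases Nat.lt_or_ge t (i+1) with h | h
    · rcases Nat.lt_or_ge t i with h' | h'
      · have := (hmono t i h' (by omega)).1; omega
      · have ht' : t = i := by omega
        rw [ht'] at hte; omega
    · rcases Nat.lt_or_ge (i+1) t with h' | h'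
      · have := (hmono (i+1) t h' (by omega)).1; omega
      · have ht' : t = i + 1 := by omega
        rw [ht'] at hte; omega
  have hgapc : ∀ i, i + 1 < m → (a (i+1)).2 ≤ (a i).2 + 1 := by
    intro i hi
    by_contra hcon
    push_neg at hcon
    have hb1 := hbox i (by omega)
    have hb2 := hbox (i+1) hi
    obtain ⟨t, ht, hte⟩ := hcolhit ((a i).2 + 1) (by omega) (by omega)
    rcases Nat.lt_or_ge t (i+1) with h | h
    · rcases Nat.lt_or_ge t i with h' | h'
      · have := (hmono t i h' (by omega)).2.1; omega
      · have ht' : t = i := by omega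
        rw [ht'] at hte; omega
    · rcases Nat.lt_or_ge (i+1) t with h' | h'
      · have := (hmono (i+1) t h' (by omega)).2.1; omega
      · have ht' : t = i + 1 := by omega
        rw [ht'] at hte; omega
  -- step sizes
  set dstep : ℕ → ℕ := fun i => ((a i).1 - (a (i+1)).1) + ((a (i+1)).2 - (a i).2)
    with hdstepdef
  have hdstep : ∀ i, i + 1 < m → dstep i = 1 ∨ dstep i = 2 := by
    intro i hi
    have h1 := hmono i (i+1) (by omega) hi
    have h2 := hgapr i hi
    have h3 := hgapc i hi
    rw [hdstepdef]
    simp only []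
    omega
  -- telescoping sums
  have hsum1 : ∑ i ∈ Finset.range (m-1), ((a i).1 - (a (i+1)).1) = r - 1 := by
    rw [tele_sum (fun i => (a i).1) (m-1)
      (fun i hi => (hmono i (i+1) (by omega) (by omega)).1)]
    have := hend.1
    have := hend.2.2.1
    omega
  have hsum2 : ∑ i ∈ Finset.range (m-1), ((a (i+1)).2 - (a i).2) = c - 1 := by
    rw [tele_sum' (fun i => (a i).2) (m-1)
      (fun i hi => (hmono i (i+1) (by omega) (by omega)).2.1)]
    have := hend.2.1
    have := hend.2.2.2
    omega
  set Br : Finset ℕ := (Finset.range (m-1)).filter (fun i => dstep i = 2) with hBrdef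
  have hBrcard : (m - 1) + Br.card = (r - 1) + (c - 1) := by
    rw [hBrdef, ← count_two_sum dstep (m-1) (fun i hi => hdstep i (by
      rw [Finset.mem_range] at hi; omega)), ← hsum1, ← hsum2, ← Finset.sum_add_distrib]
  -- the quotient
  set Q := Quot (sameComp (↑D : Set (ℕ × ℕ))) with hQdef
  haveI : Finite ↥(↑D : Set (ℕ × ℕ)) := D.finite_toSet
  haveI : Finite Q := Quot.finite _
  obtain ⟨p0, hp0⟩ := hne
  have hp0' : p0 ∈ (↑D : Set (ℕ × ℕ)) := hp0
  haveI : Nonempty Q := ⟨Quot.mk _ ⟨p0, hp0'⟩⟩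
  have hkQ : Nat.card Q = k := hk
  have hk1 : 1 ≤ k := by rw [← hkQ]; exact Nat.card_pos
  have hmrc : m = r + c - k := by rw [hmcard]; exact hcard
  have hkrc : k ≤ r + c - 1 := by omega
  have hBrk : Br.card = k - 1 := by omega
  set f : ℕ × ℕ → Q := fun x =>
    if h : x ∈ (↑D : Set (ℕ × ℕ)) then Quot.mk _ ⟨x, h⟩ else Quot.mk _ ⟨p0, hp0'⟩ with hfdef
  have hfeq : ∀ x (hx : x ∈ (↑D : Set (ℕ × ℕ))), f x = Quot.mk _ ⟨x, hx⟩ := by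
    intro x hx; rw [hfdef]; simp only [dif_pos hx]
  set g : ℕ → Q := fun i => f (a i) with hgdef
  -- same component across non-diagonal steps
  have hstep : ∀ i, i + 1 < m → i ∉ Br → g i = g (i+1) := by
    intro i hi hiBr
    have hd : dstep i = 1 := by
      rcases hdstep i hi with h | h
      · exact h
      · exfalso; apply hiBr
        rw [hBrdef, Finset.mem_filter, Finset.mem_range]
        exact ⟨by omega, h⟩
    have h1 := hmono i (i+1) (by omega) hi
    have hshare : (a i).1 = (a (i+1)).1 ∨ (a i).2 = (a (i+1)).2 := by
      rw [hdstepdef] at hd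
      simp only [] at hd
      omega
    rw [hgdef]
    simp only []
    rw [hfeq _ (haD i (by omega)), hfeq _ (haD (i+1) hi)]
    exact (quot_mk_eq_iff.2 (Relation.ReflTransGen.single ⟨haD (i+1) hi, hshare⟩))
  have hsurj : ∀ q : Q, ∃ i, i < m ∧ g i = q := by
    intro q
    obtain ⟨⟨x, hxD⟩, rfl⟩ := Quot.exists_rep q
    have hb := hocc.1 x hxD
    obtain ⟨t, ht, hte⟩ := hrowhit x.1 (by omega) (by omega)
    refine ⟨t, ht, ?_⟩
    rw [hgdef]
    simp only []
    rw [hfeq _ (haD t ht)]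
    exact quot_mk_eq_iff.2 (Relation.ReflTransGen.single ⟨hxD, Or.inl hte⟩)
  obtain ⟨hB1, hB2⟩ := blocks (by omega : 0 < m) g Br
    (by intro i hi; rw [hBrdef, Finset.mem_filter] at hi; exact hi.1)
    hstep hsurj (by rw [hkQ]; omega)
  -- now build the path for each p
  intro p hp
  have hpD : p ∈ (↑D : Set (ℕ × ℕ)) := hp
  set cls : Q := Quot.mk _ ⟨p, hpD⟩ with hclsdef
  have hfq : ∀ x, x ∈ (↑D : Set (ℕ × ℕ)) → (f x = cls ↔ x ∈ component (↑D) p) := by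
    intro x hx
    rw [hfeq _ hx, hclsdef]
    constructor
    · intro h; exact ⟨hx, quot_mk_eq_iff.1 h.symm⟩
    · intro h; exact (quot_mk_eq_iff.2 h.2).symm
  set A : Finset ℕ := (Finset.range m).filter (fun i => g i = cls) with hAdef
  have hAne : A.Nonempty := by
    obtain ⟨i, hi, hie⟩ := hsurj cls
    exact ⟨i, by rw [hAdef, Finset.mem_filter, Finset.mem_range]; exact ⟨hi, hie⟩⟩
  set ai : ℕ := A.min' hAne with haidef
  set bi : ℕ := A.max' hAne with hbidef
  have hamem : ai ∈ A := Finset.min'_mem A hAne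
  have hbmem : bi ∈ A := Finset.max'_mem A hAne
  rw [hAdef, Finset.mem_filter, Finset.mem_range] at hamem hbmem
  have hab : ai ≤ bi := Finset.min'_le A bi (Finset.max'_mem A hAne)
  have hkey : ∀ t, t < m → (g t = cls ↔ (ai ≤ t ∧ t ≤ bi)) := by
    intro t ht
    constructor
    · intro hgt
      have htA : t ∈ A := by rw [hAdef, Finset.mem_filter, Finset.mem_range]; exact ⟨ht, hgt⟩
      exact ⟨Finset.min'_le A t htA, Finset.le_max' A t htA⟩
    · rintro ⟨h1, h2⟩
      exact (hB1 ai t bi h1 h2 hbmem.1 (hamem.2.trans hbmem.2.symm)).trans hamem.2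
  -- the path
  set L : List (ℕ × ℕ) := (l.drop ai).take (bi + 1 - ai) with hLdef
  have hLlen : L.length = bi + 1 - ai := by
    rw [hLdef, List.length_take, List.length_drop]
    have : bi < m := hbmem.1
    omega
  have hLget : ∀ i (h : i < L.length), L[i] = a (ai + i) := by
    intro i h
    simp only [hLdef, List.getElem_take, List.getElem_drop]
    exact (hget (ai + i) (by rw [hLlen] at h; have := hbmem.1; omega)).symm
  have hLne : L ≠ [] := by
    have : 0 < L.length := by rw [hLlen]; omega
    exact List.length_pos_iff.1 this
  have hLmemcomp : ∀ x ∈ L, x ∈ component (↑D) p := by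
    intro x hx
    obtain ⟨i, hi, hie⟩ := List.mem_iff_getElem.1 hx
    rw [hLget i hi] at hie
    have hidx : ai + i < m := by rw [hLlen] at hi; have := hbmem.1; omega
    have : g (ai + i) = cls := (hkey (ai + i) hidx).2 (by rw [hLlen] at hi; omega)
    rw [hgdef] at this
    exact hie ▸ ((hfq _ (haD _ hidx)).1 this)
  have hchain : List.Chain' PathStep L := by
    apply List.isChain_iff_getElem.2
    intro i hi
    rw [hLget i (by omega), hLget (i+1) (by omega)]
    have hilen : i < L.length - 1 := by omega
    rw [hLlen] at hilen
    have hbm : bi < m := hbmem.1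
    set t : ℕ := ai + i with htdef
    have ht1 : t + 1 < m := by omega
    have hgt : g t = cls := (hkey t (by omega)).2 (by omega)
    have hgt1 : g (t+1) = cls := (hkey (t+1) (by omega)).2 (by omega)
    have htBr : t ∉ Br := fun h => hB2 t h (by rw [hgt, hgt1])
    have hd : dstep t = 1 := by
      rcases hdstep t ht1 with h | h
      · exact h
      · exfalso; apply htBr
        rw [hBrdef, Finset.mem_filter, Finset.mem_range]
        exact ⟨by omega, h⟩
    have h1 := hmono t (t+1) (by omega) ht1
    rw [hdstepdef] at hd
    simp only [] at hd
    show ((a (t+1)).1 + 1 = (a t).1 ∧ (a (t+1)).2 = (a t).2) ∨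
      ((a (t+1)).1 = (a t).1 ∧ (a (t+1)).2 = (a t).2 + 1)
    omega
  -- head and last
  have hhead : L.head hLne = a ai := by
    rw [List.head_eq_getElem, hLget 0 (by rw [hLlen]; omega)]
    norm_num
  have hlast : L.getLast hLne = a bi := by
    rw [List.getLast_eq_getElem, hLget (L.length - 1) (by rw [hLlen]; omega)]
    congr 1
    rw [hLlen]
    omega
  -- bounds for SW/NE
  have hbound : ∀ x, x ∈ component (↑D) p →
      (x.1 ≤ (a ai).1 ∧ (a ai).2 ≤ x.2) ∧ ((a bi).1 ≤ x.1 ∧ x.2 ≤ (a bi).2) := by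
    intro x hxc
    have hxD : x ∈ (↑D : Set (ℕ × ℕ)) := hxc.1
    have hbx := hocc.1 x hxD
    obtain ⟨t, ht, hte⟩ := hrowhit x.1 (by omega) (by omega)
    obtain ⟨t', ht', hte'⟩ := hcolhit x.2 (by omega) (by omega)
    have hgt : g t = cls := by
      have hatc : a t ∈ component (↑D) x :=
        mem_component_of_share hxD (haD t ht) (Or.inl hte.symm)
      rw [component_eq_of_mem hpD hxc] at hatc
      rw [hgdef]
      exact (hfq _ (haD t ht)).2 hatc
    have hgt' : g t' = cls := by
      have hatc : a t' ∈ component (↑D) x :=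
        mem_component_of_share hxD (haD t' ht') (Or.inr hte'.symm)
      rw [component_eq_of_mem hpD hxc] at hatc
      rw [hgdef]
      exact (hfq _ (haD t' ht')).2 hatc
    have hint : ai ≤ t ∧ t ≤ bi := (hkey t ht).1 hgt
    have hint' : ai ≤ t' ∧ t' ≤ bi := (hkey t' ht').1 hgt'
    constructor
    · constructor
      · rcases Nat.eq_or_lt_of_le hint.1 with h | h
        · rw [h]; omega
        · have := (hmono ai t h ht).1; omega
      · rcases Nat.eq_or_lt_of_le hint'.1 with h | h
        · rw [h]; omega
        · have := (hmono ai t' h ht').2.1; omega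
    · constructor
      · rcases Nat.eq_or_lt_of_le hint.2 with h | h
        · rw [← h]; omega
        · have := (hmono t bi h hbmem.1).1; omega
      · rcases Nat.eq_or_lt_of_le hint'.2 with h | h
        · rw [← h]; omega
        · have := (hmono t' bi h hbmem.1).2.1; omega
  have hamemc : a ai ∈ component (↑D) p := by
    have := hamem.2
    rw [hgdef] at this
    exact (hfq _ (haD ai hamem.1)).1 this
  have hbmemc : a bi ∈ component (↑D) p := by
    have := hbmem.2
    rw [hgdef] at this
    exact (hfq _ (haD bi hbmem.1)).1 this
  refine ⟨L, ⟨hLmemcomp, hchain, hLne, ?_, ?_⟩, ?_⟩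
  · rw [hhead]
    exact ⟨hamemc, fun x hx => (hbound x hx).1⟩
  · rw [hlast]
    exact ⟨hbmemc, fun x hx => (hbound x hx).2⟩
  · ext x
    simp only [Set.mem_inter_iff, Set.mem_setOf_eq, Finset.mem_coe]
    constructor
    · rintro ⟨hxS, hxc⟩
      have hxl : x ∈ l := by rw [hldef, Finset.mem_sort]; exact hxS
      obtain ⟨t, ht, hte⟩ := List.mem_iff_getElem.1 hxl
      have hat : a t = x := by rw [hget t ht, hte]
      have hgt : g t = cls := by
        rw [hgdef]
        simp only []
        rw [hat]
        exact (hfq x hxc.1).2 hxc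
      have hint := (hkey t ht).1 hgt
      have : L[t - ai]'(by rw [hLlen]; omega) = x := by
        rw [hLget (t - ai) (by rw [hLlen]; omega), ← hat]
        congr 1
        omega
      rw [← this]
      exact List.getElem_mem _
    · intro hxL
      refine ⟨?_, hLmemcomp x hxL⟩
      obtain ⟨i, hi, hie⟩ := List.mem_iff_getElem.1 hxL
      rw [hLget i hi] at hie
      rw [← hie]
      exact haS _ (by rw [hLlen] at hi; have := hbmem.1; omega)

end Fwd

theorem stmt3 (D : Finset (ℕ × ℕ)) (r c k : ℕ) (hne : D.Nonempty)
    (hskew : IsSkew (↑D)) (hocc : Occupies (↑D) r c) (hk : compCount (↑D) = k)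
    (S : Finset (ℕ × ℕ)) (hS : (↑S : Set (ℕ × ℕ)) ⊆ (↑D : Set (ℕ × ℕ))) :
    IsNASF D r c k S ↔
      ∀ p ∈ D, ∃ L : List (ℕ × ℕ),
        IsMonoPath (component (↑D) p) L ∧
        ((↑S : Set (ℕ × ℕ)) ∩ component (↑D) p) = {q | q ∈ L} := by
  constructor
  · intro hN
    exact mp_fwd D r c k hne hocc hk S hN
  · intro H
    exact mp_rev D r c k hne hskew hocc hk S hS H
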